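/- arXiv:2605.28269 — 7 statements merged into one kernel-verified Lean document; each statement's English description precedes it below -/
import Mathlib

section
/- For every integer p ≥ 1, every s ∈ ℕ, every q ∈ (0,1)^p, and every λ ∈ ℝ^p with λ_j > 0 for all j and Σ_{j=1}^p λ_j = p, the hypergraph-induced multinomial (H-Multinomial) mass function with parameters (s, q, λ) sums to 1 over all d ∈ ℕ^p; that is, it defines a valid probability distribution on ℕ^p. -/
open scoped BigOperators

/-- Activation pattern: `act d j = 1` if word `j` appears in document `d`, else `0`. -/
def act {p : ℕ} (d : Fin p → ℕ) (j : Fin p) : ℕ := if 0 < d j then 1 else 0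

/-- Repetition vector: occurrences beyond the first appearance. -/
def rep {p : ℕ} (d : Fin p → ℕ) (j : Fin p) : ℕ := d j - act d j

/-- The hypergraph-induced multinomial (H-Multinomial) mass function with
parameters `(s, q, lam)`. -/
noncomputable def hPMF {p : ℕ} (s : ℕ) (q lam : Fin p → ℝ) (d : Fin p → ℕ) : ℝ :=
  if d = 0 then ∏ j, (1 - q j)
  else if (∑ j, rep d j) = s then
    ((s.factorial : ℝ) / ∏ j, ((rep d j).factorial : ℝ)) *
      (∏ j, (q j) ^ act d j * (1 - q j) ^ (1 - act d j)) *
      (∏ j, ((lam j * (act d j : ℝ)) / (∑ u, lam u * (act d u : ℝ))) ^ rep d j)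
  else 0

lemma act_le {p : ℕ} (d : Fin p → ℕ) (j : Fin p) : act d j ≤ d j := by
  unfold act; split <;> omega

lemma act_add_rep {p : ℕ} (d : Fin p → ℕ) (j : Fin p) : act d j + rep d j = d j := by
  unfold rep act; split <;> omega

lemma rep_le {p : ℕ} (d : Fin p → ℕ) (j : Fin p) {s : ℕ}
    (h : (∑ j, rep d j) = s) : rep d j ≤ s := by
  subst h
  exact Finset.single_le_sum (f := fun j => rep d j) (fun _ _ => Nat.zero_le _) (Finset.mem_univ j)

/-- the e-sum identity -/
lemma esum {p : ℕ} (q : Fin p → ℝ) :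
    ∑ e ∈ Fintype.piFinset (fun _ : Fin p => ({0, 1} : Finset ℕ)),
      ∏ j, (q j) ^ e j * (1 - q j) ^ (1 - e j) = 1 := by
  have h := Finset.prod_univ_sum (fun _ : Fin p => ({0, 1} : Finset ℕ))
    (fun j x => (q j) ^ x * (1 - q j) ^ (1 - x))
  rw [← h]
  have : ∀ j : Fin p, ∑ x ∈ ({0, 1} : Finset ℕ), (q j) ^ x * (1 - q j) ^ (1 - x) = 1 := by
    intro j
    rw [Finset.sum_pair (by norm_num)]
    norm_num
  simp [this]

/-- the H-Multinomial mass function sums to one over all of `ℕ^p`,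
i.e. it is a valid probability distribution. -/
theorem hPMF_tsum_eq_one (p : ℕ) (hp : 1 ≤ p) (s : ℕ) (q lam : Fin p → ℝ)
    (hq : ∀ j, 0 < q j ∧ q j < 1) (hlam : ∀ j, 0 < lam j)
    (hlamsum : ∑ j, lam j = (p : ℝ)) :
    ∑' d : Fin p → ℕ, hPMF s q lam d = 1 := by
  classical
  set A : Finset (Fin p → ℕ) := Fintype.piFinset (fun _ : Fin p => Finset.range (s+2)) with hA
  have h0A : (0 : Fin p → ℕ) ∈ A := by
    simp [hA, Fintype.mem_piFinset]
  -- hPMF vanishes outside A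
  have hvanish : ∀ d, d ∉ A → hPMF s q lam d = 0 := by
    intro d hd
    simp only [hA, Fintype.mem_piFinset, Finset.mem_range, not_forall, not_lt] at hd
    obtain ⟨j, hj⟩ := hd
    have hd0 : d ≠ 0 := by
      intro h; rw [h] at hj; simp only [Pi.zero_apply] at hj; omega
    have hrep : rep d j ≥ s + 1 := by
      have h1 : act d j ≤ 1 := by unfold act; split <;> omega
      unfold rep; omega
    have hsum : (∑ j, rep d j) ≠ s := by
      have hle := Finset.single_le_sum (f := rep d) (fun _ _ => Nat.zero_le _)
        (Finset.mem_univ j)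
      omega
    rw [hPMF, if_neg hd0, if_neg hsum]
  rw [tsum_eq_sum (s := A) hvanish]
  -- split off d = 0
  rw [← Finset.add_sum_erase _ _ h0A]
  have h00 : hPMF s q lam 0 = ∏ j, (1 - q j) := by rw [hPMF, if_pos rfl]
  -- set up the pair index set
  set E : Finset (Fin p → ℕ) := Fintype.piFinset (fun _ : Fin p => ({0, 1} : Finset ℕ)) with hE
  have h0E : (0 : Fin p → ℕ) ∈ E := by simp [hE, Fintype.mem_piFinset]
  set R : Finset (Fin p → ℕ) := Finset.piAntidiag Finset.univ s with hR
  set G : (Fin p → ℕ) → (Fin p → ℕ) → ℝ := fun e r =>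
    ((s.factorial : ℝ) / ∏ j, ((r j).factorial : ℝ)) *
      (∏ j, (q j) ^ e j * (1 - q j) ^ (1 - e j)) *
      (∏ j, ((lam j * (e j : ℝ)) / (∑ u, lam u * (e u : ℝ))) ^ r j) with hG
  -- the nonzero part of the sum
  have key : ∑ d ∈ A.erase 0, hPMF s q lam d
      = ∑ e ∈ E.erase 0, ∑ r ∈ R, G e r := by
    have step1 : ∑ d ∈ A.erase 0, hPMF s q lam d
        = ∑ d ∈ (A.erase 0).filter (fun d => (∑ j, rep d j) = s), hPMF s q lam d := by
      refine (Finset.sum_filter_of_ne ?_).symm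
      intro d hd hne
      by_contra hc
      rw [hPMF, if_neg (Finset.ne_of_mem_erase hd)] at hne
      rw [if_neg hc] at hne
      exact hne rfl
    rw [step1]
    have step2 : ∑ e ∈ E.erase 0, ∑ r ∈ R, G e r
        = ∑ er ∈ ((E.erase 0) ×ˢ R).filter (fun er => ∀ j, er.1 j = 0 → er.2 j = 0),
            G er.1 er.2 := by
      rw [Finset.sum_filter, Finset.sum_product]
      refine Finset.sum_congr rfl fun e he => Finset.sum_congr rfl fun r hr => ?_
      by_cases h : ∀ j, e j = 0 → r j = 0
      · rw [if_pos h]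
      · rw [if_neg h]
        push_neg at h
        obtain ⟨j, hj0, hjr⟩ := h
        have : ((lam j * (e j : ℝ)) / (∑ u, lam u * (e u : ℝ))) ^ r j = 0 := by
          rw [hj0]
          simp [zero_pow hjr]
        rw [hG]
        simp only
        exact mul_eq_zero_of_right _ (Finset.prod_eq_zero (Finset.mem_univ j) this)
    rw [step2]
    refine Finset.sum_bij' (fun d _ => (act d, rep d)) (fun er _ => er.1 + er.2)
      ?_ ?_ ?_ ?_ ?_
    · -- forward membership
      intro d hd
      simp only [Finset.mem_filter, Finset.mem_erase, Finset.mem_product] at hd ⊢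
      obtain ⟨⟨hd0, hdA⟩, hds⟩ := hd
      refine ⟨⟨⟨?_, ?_⟩, ?_⟩, ?_⟩
      · -- act d ≠ 0
        intro h
        apply hd0
        funext j
        have hj := congrFun h j
        simp only [act, Pi.zero_apply] at hj
        simp only [Pi.zero_apply]
        by_cases hdj : 0 < d j
        · rw [if_pos hdj] at hj; exact absurd hj one_ne_zero
        · omega
      · simp only [hE, Fintype.mem_piFinset]
        intro j; unfold act; split <;> simp
      · simp only [hR, Finset.mem_piAntidiag]
        exact ⟨hds, fun i _ => Finset.mem_univ i⟩
      · intro j hj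
        unfold rep act at *
        split at hj <;> omega
    · -- backward membership
      intro er her
      simp only [Finset.mem_filter, Finset.mem_erase, Finset.mem_product] at her ⊢
      obtain ⟨⟨⟨he0, heE⟩, hrR⟩, hsupp⟩ := her
      simp only [hE, Fintype.mem_piFinset, Finset.mem_insert, Finset.mem_singleton] at heE
      simp only [hR, Finset.mem_piAntidiag] at hrR
      have hact : act (er.1 + er.2) = er.1 := by
        funext j
        rcases heE j with h | h
        · have := hsupp j h
          unfold act
          simp [h, this]
        · unfold act
          simp only [Pi.add_apply]
          rw [if_pos (by omega)]
          omega
      have hrep : rep (er.1 + er.2) = er.2 := by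
        funext j
        unfold rep
        rw [hact]
        simp
      constructor
      constructor
      · intro h
        apply he0
        funext j
        have := congrFun h j
        simp only [Pi.add_apply] at this
        rcases heE j with h' | h' <;> simp_all
      · simp only [hA, Fintype.mem_piFinset, Finset.mem_range]
        intro j
        have h1 : er.1 j ≤ 1 := by rcases heE j with h | h <;> omega
        have h2 : er.2 j ≤ s := by
          rw [← hrR.1]
          exact Finset.single_le_sum (f := fun j => er.2 j) (fun _ _ => Nat.zero_le _)
            (Finset.mem_univ j)
        simp only [Pi.add_apply]
        omega
      · rw [hrep, hrR.1]
    · -- left inverse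
      intro d _
      funext j
      simp only [Pi.add_apply]
      exact act_add_rep d j
    · -- right inverse
      intro er her
      simp only [Finset.mem_filter, Finset.mem_erase, Finset.mem_product] at her
      obtain ⟨⟨⟨he0, heE⟩, hrR⟩, hsupp⟩ := her
      simp only [hE, Fintype.mem_piFinset, Finset.mem_insert, Finset.mem_singleton] at heE
      have hact : act (er.1 + er.2) = er.1 := by
        funext j
        rcases heE j with h | h
        · have := hsupp j h
          unfold act
          simp [h, this]
        · unfold act
          simp only [Pi.add_apply]
          rw [if_pos (by omega)]
          omega
      have hrep : rep (er.1 + er.2) = er.2 := by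
        funext j
        unfold rep
        rw [hact]
        simp
      ext <;> simp [hact, hrep]
    · -- value equality
      intro d hd
      simp only [Finset.mem_filter, Finset.mem_erase] at hd
      rw [hPMF, if_neg hd.1.1, if_pos hd.2, hG]
  rw [key, h00]
  -- inner sum over r equals 1 for each nonzero e
  have inner : ∀ e ∈ E.erase 0, ∑ r ∈ R, G e r
      = ∏ j, (q j) ^ e j * (1 - q j) ^ (1 - e j) := by
    intro e he
    rw [Finset.mem_erase] at he
    obtain ⟨he0, heE⟩ := he
    simp only [hE, Fintype.mem_piFinset, Finset.mem_insert, Finset.mem_singleton] at heE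
    -- Λ > 0
    obtain ⟨j0, hj0⟩ : ∃ j, e j = 1 := by
      by_contra h
      push_neg at h
      apply he0
      funext j
      rcases heE j with h' | h' <;> simp_all
    have hLpos : 0 < ∑ u, lam u * (e u : ℝ) := by
      apply Finset.sum_pos'
      · intro u _
        rcases heE u with h | h <;> simp [h]
        exact (hlam u).le
      · exact ⟨j0, Finset.mem_univ j0, by simp [hj0]; exact hlam j0⟩
    have hsum1 : ∑ j, (lam j * (e j : ℝ)) / (∑ u, lam u * (e u : ℝ)) = 1 := by
      rw [← Finset.sum_div, div_self hLpos.ne']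
    have hmt := Finset.sum_pow_eq_sum_piAntidiag Finset.univ
      (fun j => (lam j * (e j : ℝ)) / (∑ u, lam u * (e u : ℝ))) s
    rw [hsum1, one_pow] at hmt
    calc ∑ r ∈ R, G e r
        = ∑ r ∈ R, (∏ j, (q j) ^ e j * (1 - q j) ^ (1 - e j)) *
            ((Nat.multinomial Finset.univ r : ℝ) *
              ∏ j, ((lam j * (e j : ℝ)) / (∑ u, lam u * (e u : ℝ))) ^ r j) := by
          refine Finset.sum_congr rfl fun r hr => ?_
          simp only [hR, Finset.mem_piAntidiag] at hr
          have hfact : (Nat.multinomial Finset.univ r : ℝ)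
              = (s.factorial : ℝ) / ∏ j, ((r j).factorial : ℝ) := by
            have hspec := Nat.multinomial_spec Finset.univ r
            rw [hr.1] at hspec
            have hprodpos : (0 : ℝ) < ∏ j, ((r j).factorial : ℝ) := by
              apply Finset.prod_pos
              intro i _
              exact_mod_cast (r i).factorial_pos
            rw [eq_div_iff hprodpos.ne', mul_comm]
            exact_mod_cast hspec
          rw [hG]
          simp only
          rw [hfact]
          ring
      _ = (∏ j, (q j) ^ e j * (1 - q j) ^ (1 - e j)) *
            ∑ r ∈ R, ((Nat.multinomial Finset.univ r : ℝ) *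
              ∏ j, ((lam j * (e j : ℝ)) / (∑ u, lam u * (e u : ℝ))) ^ r j) := by
          rw [Finset.mul_sum]
      _ = ∏ j, (q j) ^ e j * (1 - q j) ^ (1 - e j) := by
          rw [hR, ← hmt, mul_one]
  rw [Finset.sum_congr rfl inner]
  -- total over e
  have etotal := esum q
  rw [← hE] at etotal
  rw [← Finset.add_sum_erase _ _ h0E] at etotal
  simp only [Pi.zero_apply, pow_zero, one_mul, Nat.sub_zero, pow_one] at etotal
  linarith
end

section
/- Fix an integer p ≥ 1. Let (s, q, λ) and (s̃, q̃, λ̃) both be admissible H-Multinomial parameter triples (so q, q̃ ∈ (0,1)^p, λ, λ̃ entrywise positive with Σ_j λ_j = Σ_j λ̃_j = p), and suppose s ≥ 1. If the H-Multinomial mass functions with parameters (s, q, λ) and (s̃, q̃, λ̃) agree at every d ∈ ℕ^p, then s = s̃, q = q̃, and λ = λ̃. -/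
open scoped BigOperators

/-- Evaluation at the single-coordinate document `d = (s+1)·δⱼ`. -/
lemma hPMF_eval_single {p : ℕ} (s : ℕ) (q lam : Fin p → ℝ)
    (hlam : ∀ u, 0 < lam u) (j : Fin p) :
    hPMF s q lam (fun u => if u = j then s + 1 else 0) =
      q j * ∏ u ∈ Finset.univ.erase j, (1 - q u) := by
  set d : Fin p → ℕ := fun u => if u = j then s + 1 else 0 with hd
  have hdne : d ≠ 0 := by
    intro h
    have := congrFun h j
    simp [hd] at this
  have hact : ∀ u, act d u = if u = j then 1 else 0 := by
    intro u; by_cases h : u = j <;> simp [act, hd, h]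
  have hrep : ∀ u, rep d u = if u = j then s else 0 := by
    intro u; by_cases h : u = j <;> simp [rep, act, hd, h]
  have hsum : (∑ u, rep d u) = s := by simp [hrep]
  have hfact : (∏ u, ((rep d u).factorial : ℝ)) = (s.factorial : ℝ) := by
    simp [hrep, apply_ite Nat.factorial, apply_ite (Nat.cast : ℕ → ℝ)]
  have hqprod : (∏ u, (q u) ^ act d u * (1 - q u) ^ (1 - act d u)) =
      q j * ∏ u ∈ Finset.univ.erase j, (1 - q u) := by
    rw [← Finset.mul_prod_erase _ _ (Finset.mem_univ j)]
    congr 1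
    · simp [hact]
    · refine Finset.prod_congr rfl fun u hu => ?_
      have : u ≠ j := (Finset.mem_erase.1 hu).1
      simp [hact, this]
  have hlsum : (∑ u, lam u * (act d u : ℝ)) = lam j := by
    simp [hact, apply_ite (Nat.cast : ℕ → ℝ), mul_ite]
  have hlprod : (∏ u, ((lam u * (act d u : ℝ)) / (∑ u, lam u * (act d u : ℝ))) ^ rep d u) = 1 := by
    rw [hlsum]
    refine Finset.prod_eq_one fun u _ => ?_
    by_cases h : u = j
    · subst h
      simp [hact, hrep, div_self (hlam u).ne']
    · simp [hrep, h]
  rw [hPMF, if_neg hdne, if_pos hsum, hfact, hqprod, hlprod,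
    div_self (by exact_mod_cast (Nat.factorial_pos s).ne'), one_mul, mul_one]

/-- Evaluation at the two-coordinate document `d = (s+1)·δⱼ + δₖ`, `j ≠ k`. -/
lemma hPMF_eval_pair {p : ℕ} (s : ℕ) (q lam : Fin p → ℝ)
    (hlam : ∀ u, 0 < lam u) {j k : Fin p} (hjk : j ≠ k) :
    hPMF s q lam (fun u => if u = j then s + 1 else if u = k then 1 else 0) =
      (∏ u, (q u) ^ act (fun u => if u = j then s + 1 else if u = k then 1 else 0) u *
        (1 - q u) ^ (1 - act (fun u => if u = j then s + 1 else if u = k then 1 else 0) u)) *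
      (lam j / (lam j + lam k)) ^ s := by
  set d : Fin p → ℕ := fun u => if u = j then s + 1 else if u = k then 1 else 0 with hd
  have hdne : d ≠ 0 := by
    intro h
    have := congrFun h j
    simp [hd] at this
  have hact : ∀ u, act d u = if u = j then 1 else if u = k then 1 else 0 := by
    intro u; by_cases h1 : u = j
    · simp [act, hd, h1]
    · by_cases h2 : u = k <;> simp [act, hd, h1, h2, Ne.symm hjk]
  have hrep : ∀ u, rep d u = if u = j then s else 0 := by
    intro u; by_cases h1 : u = j
    · simp [rep, act, hd, h1]
    · by_cases h2 : u = k <;> simp [rep, act, hd, h1, h2, Ne.symm hjk]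
  have hsum : (∑ u, rep d u) = s := by simp [hrep]
  have hfact : (∏ u, ((rep d u).factorial : ℝ)) = (s.factorial : ℝ) := by
    simp [hrep, apply_ite Nat.factorial, apply_ite (Nat.cast : ℕ → ℝ)]
  have hlsum : (∑ u, lam u * (act d u : ℝ)) = lam j + lam k := by
    have key : ∀ u, lam u * ((act d u : ℕ) : ℝ) =
        (if u = j then lam j else 0) + (if u = k then lam k else 0) := by
      intro u
      by_cases h1 : u = j
      · subst h1; simp [hact, hjk]
      · by_cases h2 : u = k
        · subst h2; simp [hact, h1]
        · simp [hact, h1, h2]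
    rw [Finset.sum_congr rfl fun u _ => key u, Finset.sum_add_distrib]
    simp
  have hlprod : (∏ u, ((lam u * (act d u : ℝ)) / (∑ u, lam u * (act d u : ℝ))) ^ rep d u) =
      (lam j / (lam j + lam k)) ^ s := by
    rw [hlsum]
    rw [Finset.prod_eq_single j (fun u _ hu => by simp [hrep, hu]) (by simp)]
    simp [hact, hrep]
  rw [hPMF, if_neg hdne, if_pos hsum, hfact, hlprod,
    div_self (by exact_mod_cast (Nat.factorial_pos s).ne'), one_mul]

/-- identifiability of the H-Multinomial parameters. If `s ≥ 1` and two
admissible parameter triples induce the same mass function on `ℕ^p`, the triples agree. -/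
theorem hPMF_identifiable (p : ℕ) (hp : 1 ≤ p)
    (s s' : ℕ) (hs : 1 ≤ s)
    (q q' lam lam' : Fin p → ℝ)
    (hq : ∀ j, 0 < q j ∧ q j < 1) (hq' : ∀ j, 0 < q' j ∧ q' j < 1)
    (hlam : ∀ j, 0 < lam j) (hlam' : ∀ j, 0 < lam' j)
    (hlamsum : ∑ j, lam j = (p : ℝ)) (hlamsum' : ∑ j, lam' j = (p : ℝ))
    (heq : ∀ d : Fin p → ℕ, hPMF s q lam d = hPMF s' q' lam' d) :
    s = s' ∧ q = q' ∧ lam = lam' := by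
  -- Step 1 : s = s'
  have j0 : Fin p := ⟨0, hp⟩
  have hss : s = s' := by
    by_contra hne
    have h1 := heq (fun u => if u = j0 then s + 1 else 0)
    rw [hPMF_eval_single s q lam hlam j0] at h1
    have hdne : (fun u => if u = j0 then s + 1 else 0) ≠ (0 : Fin p → ℕ) := by
      intro h
      have := congrFun h j0
      simp at this
    have hrep : ∀ u : Fin p, rep (fun u => if u = j0 then s + 1 else 0) u =
        if u = j0 then s else 0 := by
      intro u; by_cases h : u = j0 <;> simp [rep, act, h]
    have hsum : (∑ u, rep (fun u => if u = j0 then s + 1 else 0) u) = s := by simp [hrep]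
    rw [hPMF, if_neg hdne, if_neg (by rw [hsum]; exact hne)] at h1
    have hpos : 0 < q j0 * ∏ u ∈ Finset.univ.erase j0, (1 - q u) :=
      mul_pos (hq j0).1 (Finset.prod_pos fun u _ => by linarith [(hq u).2])
    exact hpos.ne' h1
  subst hss
  -- Step 2 : q = q'
  have hP0 : (∏ u, (1 - q u)) = ∏ u, (1 - q' u) := by
    have := heq 0
    simpa [hPMF] using this
  have hqq : q = q' := by
    funext j
    have h1 := heq (fun u => if u = j then s + 1 else 0)
    rw [hPMF_eval_single s q lam hlam j, hPMF_eval_single s q' lam' hlam' j] at h1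
    have h2 : (1 - q j) * ∏ u ∈ Finset.univ.erase j, (1 - q u) =
        (1 - q' j) * ∏ u ∈ Finset.univ.erase j, (1 - q' u) := by
      rw [← Finset.mul_prod_erase Finset.univ (fun u => 1 - q u) (Finset.mem_univ j),
        ← Finset.mul_prod_erase Finset.univ (fun u => 1 - q' u) (Finset.mem_univ j)] at hP0
      exact hP0
    have hA : (∏ u ∈ Finset.univ.erase j, (1 - q u)) =
        ∏ u ∈ Finset.univ.erase j, (1 - q' u) := by linarith
    have hApos : 0 < ∏ u ∈ Finset.univ.erase j, (1 - q u) :=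
      Finset.prod_pos fun u _ => by linarith [(hq u).2]
    rw [← hA] at h1
    exact mul_right_cancel₀ hApos.ne' h1
  subst hqq
  refine ⟨rfl, rfl, ?_⟩
  -- Step 3 : lam = lam'
  have hratio : ∀ j k : Fin p, lam j * lam' k = lam' j * lam k := by
    intro j k
    by_cases hjk : j = k
    · subst hjk; ring
    · have h1 := heq (fun u => if u = j then s + 1 else if u = k then 1 else 0)
      rw [hPMF_eval_pair s q lam hlam hjk, hPMF_eval_pair s q lam' hlam' hjk] at h1
      have hQpos : 0 < ∏ u, (q u) ^ act (fun u => if u = j then s + 1 else if u = k then 1 else 0) u *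
          (1 - q u) ^ (1 - act (fun u => if u = j then s + 1 else if u = k then 1 else 0) u) :=
        Finset.prod_pos fun u _ =>
          mul_pos (pow_pos (hq u).1 _) (pow_pos (by linarith [(hq u).2]) _)
      have h2 : (lam j / (lam j + lam k)) ^ s = (lam' j / (lam' j + lam' k)) ^ s :=
        mul_left_cancel₀ hQpos.ne' h1
      have hden : 0 < lam j + lam k := by linarith [hlam j, hlam k]
      have hden' : 0 < lam' j + lam' k := by linarith [hlam' j, hlam' k]
      have h3 : lam j / (lam j + lam k) = lam' j / (lam' j + lam' k) :=
        (pow_left_inj₀ (le_of_lt (div_pos (hlam j) hden))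
          (le_of_lt (div_pos (hlam' j) hden')) (by omega)).1 h2
      have h4 : lam j * (lam' j + lam' k) = lam' j * (lam j + lam k) := by
        field_simp at h3
        linarith [h3]
      nlinarith [h4]
  funext j
  have hsum1 : lam j * (∑ k, lam' k) = lam' j * ∑ k, lam k := by
    rw [Finset.mul_sum, Finset.mul_sum]
    exact Finset.sum_congr rfl fun k _ => hratio j k
  rw [hlamsum, hlamsum'] at hsum1
  have hp0 : (0:ℝ) < p := by exact_mod_cast hp
  have := mul_right_cancel₀ hp0.ne' hsum1
  linarith [this]
end

section
/- Let D be distributed according to the H-Multinomial distribution with parameters (s, q, λ). Then for every ε ∈ {0,1}^p, the probability that the activation pattern e(D) equals ε is ∏_{j=1}^p q_j^{ε_j} (1−q_j)^{1−ε_j}; in particular, the activation pattern is distributed as a vector of independent Bernoulli(q_j) variables. -/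
open scoped BigOperators

/-- under the H-Multinomial law, the activation pattern `e(D)` equals a
given `ε ∈ {0,1}^p` with probability `∏_j q_j^{ε_j} (1-q_j)^{1-ε_j}`; i.e. it is
distributed as independent Bernoulli(q_j) coordinates. -/
theorem hPMF_activation_bernoulli (p : ℕ) (hp : 1 ≤ p) (s : ℕ) (q lam : Fin p → ℝ)
    (hq : ∀ j, 0 < q j ∧ q j < 1) (hlam : ∀ j, 0 < lam j)
    (hlamsum : ∑ j, lam j = (p : ℝ))
    (ε : Fin p → ℕ) (hε : ∀ j, ε j ≤ 1) :
    ∑' d : Fin p → ℕ, (if act d = ε then hPMF s q lam d else 0)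
      = ∏ j, (q j) ^ ε j * (1 - q j) ^ (1 - ε j) := by
  classical
  by_cases h0 : ε = 0
  · subst h0
    rw [tsum_eq_single (0 : Fin p → ℕ)]
    · have hact0 : act (0 : Fin p → ℕ) = 0 := by
        funext j; simp [act]
      rw [if_pos hact0, hPMF, if_pos rfl]
      simp
    · intro d hd
      rw [if_neg]
      intro hact
      apply hd
      funext j
      have h := congrFun hact j
      simp only [act, Pi.zero_apply] at h
      show d j = 0
      by_cases h' : 0 < d j
      · rw [if_pos h'] at h; omega
      · omega
  · -- active set
    obtain ⟨j0, hj0⟩ : ∃ j, ε j = 1 := by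
      by_contra h; push_neg at h
      exact h0 (funext fun j => by have h1 := hε j; have h2 := h j; show ε j = 0; omega)
    set A : Finset (Fin p) := Finset.univ.filter (fun j => ε j = 1) with hAdef
    have hA : ∀ j, j ∈ A ↔ ε j = 1 := by
      intro j; simp [hAdef]
    have hAc : ∀ j ∉ A, ε j = 0 := by
      intro j hj
      have := (hA j).not.1 hj
      have := hε j
      omega
    have hj0A : j0 ∈ A := (hA j0).2 hj0
    set Λ : ℝ := ∑ j ∈ A, lam j with hΛdef
    have hΛ : 0 < Λ := Finset.sum_pos (fun j _ => hlam j) ⟨j0, hj0A⟩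
    have hΛcast : (∑ u, lam u * ((ε u : ℕ) : ℝ)) = Λ := by
      rw [hΛdef, ← Finset.sum_filter_add_sum_filter_not Finset.univ (fun j => ε j = 1)
        (fun u => lam u * ((ε u : ℕ) : ℝ)), ← hAdef]
      have h1 : ∑ u ∈ A, lam u * ((ε u : ℕ) : ℝ) = ∑ u ∈ A, lam u := by
        apply Finset.sum_congr rfl
        intro u hu; rw [(hA u).1 hu]; simp
      have h2 : ∑ u ∈ Finset.univ.filter (fun j => ¬ ε j = 1), lam u * ((ε u : ℕ) : ℝ) = 0 := by
        apply Finset.sum_eq_zero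
        intro u hu
        have hu' : u ∉ A := by
          simp only [hAdef, Finset.mem_filter, Finset.mem_univ, true_and] at hu ⊢
          exact hu
        rw [hAc u hu']; simp
      rw [h1, h2, add_zero]
    set S : Finset (Fin p → ℕ) :=
      (Finset.piAntidiag A s).image (fun r j => ε j + r j) with hSdef
    have key : ∀ d : Fin p → ℕ,
        (if act d = ε then hPMF s q lam d else 0) ≠ 0 → d ∈ S := by
      intro d hne
      by_cases hact : act d = ε
      · rw [if_pos hact] at hne
        have hd0 : d ≠ 0 := by
          intro h; subst h
          apply h0
          funext j
          have := congrFun hact j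
          simp [act] at this
          simp [← this]
        rw [hPMF, if_neg hd0] at hne
        have hs : (∑ j, rep d j) = s := by
          by_contra h; rw [if_neg h] at hne; exact hne rfl
        have hrmem : rep d ∈ Finset.piAntidiag A s := by
          rw [Finset.mem_piAntidiag]
          have hout : ∀ i ∉ A, rep d i = 0 := by
            intro i hi
            have hei := hAc i hi
            have hai := congrFun hact i
            simp only [act, rep] at hai ⊢
            split_ifs at hai ⊢ with h' <;> omega
          constructor
          · rw [← hs]
            exact (Finset.sum_subset (Finset.subset_univ A)
              (fun i _ hi => hout i hi)).symm ▸ rfl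
          · intro i hi
            by_contra hiA
            exact hi (hout i hiA)
        refine Finset.mem_image.2 ⟨rep d, hrmem, ?_⟩
        funext j
        have hai := congrFun hact j
        simp only [act, rep] at hai ⊢
        split_ifs at hai ⊢ with h' <;> omega
      · rw [if_neg hact] at hne; exact absurd rfl hne
    rw [tsum_eq_sum (f := fun d => if act d = ε then hPMF s q lam d else 0)
      (s := S) (fun d hd => by by_contra hne; exact hd (key d hne))]
    rw [hSdef, Finset.sum_image (by
      intro r hr r' hr' h
      funext j
      have := congrFun h j
      beta_reduce at this
      omega)]
    have hterm : ∀ r ∈ Finset.piAntidiag A s,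
        (if act (fun j => ε j + r j) = ε then hPMF s q lam (fun j => ε j + r j) else 0)
          = (∏ j, (q j) ^ ε j * (1 - q j) ^ (1 - ε j)) *
            ((Nat.multinomial A r : ℝ) * ∏ i ∈ A, (lam i / Λ) ^ r i) := by
      intro r hr
      rw [Finset.mem_piAntidiag] at hr
      obtain ⟨hr1, hr2⟩ := hr
      have hrc : ∀ j ∉ A, r j = 0 := by
        intro j hj
        by_contra h
        exact hj (hr2 j h)
      have hactr : act (fun j => ε j + r j) = ε := by
        funext j
        by_cases hjA : j ∈ A
        · have := (hA j).1 hjA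
          simp [act, this]
        · have h1 := hAc j hjA
          have h2 := hrc j hjA
          simp [act, h1, h2]
      have hd0 : (fun j => ε j + r j) ≠ 0 := by
        intro h
        have := congrFun h j0
        simp only [Pi.zero_apply] at this
        omega
      have hrep : rep (fun j => ε j + r j) = r := by
        funext j
        have := congrFun hactr j
        simp only [rep, this]
        omega
      have hsum : (∑ j, rep (fun j => ε j + r j) j) = s := by
        rw [hrep, ← hr1]
        exact (Finset.sum_subset (Finset.subset_univ A)
          (fun i _ hi => hrc i hi)).symm
      rw [if_pos hactr, hPMF, if_neg hd0, if_pos hsum, hrep, hactr]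
      have hfact : (∏ j, ((r j).factorial : ℝ)) = ∏ j ∈ A, ((r j).factorial : ℝ) := by
        symm
        apply Finset.prod_subset (Finset.subset_univ A)
        intro i _ hi
        rw [hrc i hi]
        simp
      have hmult : ((s.factorial : ℝ) / ∏ j, ((r j).factorial : ℝ))
          = (Nat.multinomial A r : ℝ) := by
        rw [hfact]
        have := Nat.multinomial_spec A r
        rw [hr1] at this
        have hprodne : (∏ j ∈ A, ((r j).factorial : ℝ)) ≠ 0 :=
          Finset.prod_ne_zero_iff.2 (fun i _ => Nat.cast_ne_zero.2 (Nat.factorial_ne_zero _))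
        field_simp
        rw [← this]
        push_cast
        ring
      have hlamprod : (∏ j, ((lam j * ((ε j : ℕ) : ℝ)) / (∑ u, lam u * ((ε u : ℕ) : ℝ))) ^ r j)
          = ∏ i ∈ A, (lam i / Λ) ^ r i := by
        rw [hΛcast]
        rw [← Finset.prod_subset (Finset.subset_univ A)
          (fun i _ hi => by rw [hrc i hi]; simp)]
        exact Finset.prod_congr rfl fun i hiA => by rw [(hA i).1 hiA]; norm_num
      rw [hmult, hlamprod]
      ring
    rw [Finset.sum_congr rfl hterm, ← Finset.mul_sum]
    have hone : ∑ r ∈ Finset.piAntidiag A s,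
        (Nat.multinomial A r : ℝ) * ∏ i ∈ A, (lam i / Λ) ^ r i = 1 := by
      rw [← Finset.sum_pow_eq_sum_piAntidiag A (fun i => lam i / Λ) s,
        ← Finset.sum_div, div_self hΛ.ne', one_pow]
    rw [hone, mul_one]
end

section
/- Let D be distributed according to the H-Multinomial distribution with parameters (s, q, λ). Then for each coordinate j ∈ {1,…,p}, the probability that D_j > 0 equals q_j. -/
open scoped BigOperators

section aux
variable {p : ℕ}

def psi (E : Finset (Fin p)) (r : Fin p → ℕ) : Fin p → ℕ :=
  fun v => (if v ∈ E then 1 else 0) + r v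

lemma act_psi (E : Finset (Fin p)) (r : Fin p → ℕ) (hr : ∀ u, r u ≠ 0 → u ∈ E) (u : Fin p) :
    act (psi E r) u = if u ∈ E then 1 else 0 := by
  by_cases h : u ∈ E
  · simp [act, psi, h]
  · have : r u = 0 := by by_contra hc; exact h (hr u hc)
    simp [act, psi, h, this]

lemma rep_psi (E : Finset (Fin p)) (r : Fin p → ℕ) (hr : ∀ u, r u ≠ 0 → u ∈ E) (u : Fin p) :
    rep (psi E r) u = r u := by
  by_cases h : u ∈ E
  · simp [rep, act_psi E r hr, psi, h]
  · have : r u = 0 := by by_contra hc; exact h (hr u hc)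
    simp [rep, act_psi E r hr, psi, h, this]

lemma psi_ne_zero (E : Finset (Fin p)) (hE : E.Nonempty) (r : Fin p → ℕ) : psi E r ≠ 0 := by
  obtain ⟨u, hu⟩ := hE
  intro h
  have := congrFun h u
  simp [psi, hu] at this

lemma psi_act_rep (d : Fin p → ℕ) :
    psi (Finset.univ.filter fun u => 0 < d u) (rep d) = d := by
  funext u
  by_cases h : 0 < d u
  · simp only [psi, rep, act, Finset.mem_filter, Finset.mem_univ, true_and, if_pos h]
    omega
  · simp only [psi, rep, act, Finset.mem_filter, Finset.mem_univ, true_and, if_neg h]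
    omega

lemma hPMF_psi (s : ℕ) (q lam : Fin p → ℝ) (E : Finset (Fin p)) (hE : E.Nonempty)
    (r : Fin p → ℕ) (hr : r ∈ Finset.piAntidiag E s) :
    hPMF s q lam (psi E r) =
      (Nat.multinomial E r : ℝ) *
        ((∏ u ∈ E, q u) * ∏ u ∈ Eᶜ, (1 - q u)) *
        ∏ u ∈ E, (lam u / ∑ v ∈ E, lam v) ^ r u := by
  classical
  rw [Finset.mem_piAntidiag] at hr
  obtain ⟨hsum, hsupp⟩ := hr
  have hrep : ∀ u, rep (psi E r) u = r u := rep_psi E r hsupp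
  have hact : ∀ u, act (psi E r) u = if u ∈ E then 1 else 0 := act_psi E r hsupp
  have hzero : ∀ u ∉ E, r u = 0 := fun u hu => by
    by_contra hc; exact hu (hsupp u hc)
  have hsum' : ∑ u, rep (psi E r) u = s := by
    simp only [hrep]
    rw [← hsum]
    exact (Finset.sum_subset (Finset.subset_univ E)
      (fun x _ hx => hzero x hx)).symm
  rw [hPMF, if_neg (psi_ne_zero E hE r), if_pos hsum']
  have hprodfac : (∏ u, ((rep (psi E r) u).factorial : ℝ)) = ∏ u ∈ E, ((r u).factorial : ℝ) := by
    simp only [hrep]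
    exact (Finset.prod_subset (Finset.subset_univ E)
      (fun x _ hx => by simp [hzero x hx])).symm
  have h1 : ((s.factorial : ℝ) / ∏ u, ((rep (psi E r) u).factorial : ℝ))
      = (Nat.multinomial E r : ℝ) := by
    rw [hprodfac, div_eq_iff (by positivity : (∏ u ∈ E, ((r u).factorial : ℝ)) ≠ 0)]
    rw [← Nat.cast_prod, ← Nat.cast_mul, mul_comm]
    rw [Nat.multinomial_spec, hsum]
  have h2 : (∏ u, (q u) ^ act (psi E r) u * (1 - q u) ^ (1 - act (psi E r) u))
      = (∏ u ∈ E, q u) * ∏ u ∈ Eᶜ, (1 - q u) := by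
    simp only [hact]
    have : ∀ u : Fin p, (q u) ^ (if u ∈ E then 1 else 0) * (1 - q u) ^ (1 - if u ∈ E then 1 else 0)
        = if u ∈ E then q u else (1 - q u) := by
      intro u; by_cases h : u ∈ E <;> simp [h]
    rw [Finset.prod_congr rfl (fun u _ => this u), Finset.prod_ite]
    congr 1
    · congr 1; ext u; simp
    · congr 1; ext u; simp
  have hlamE : (∑ u, lam u * (act (psi E r) u : ℝ)) = ∑ v ∈ E, lam v := by
    simp only [hact]
    rw [← Finset.sum_subset (Finset.subset_univ E) (fun x _ hx => by simp [hx])]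
    exact Finset.sum_congr rfl (fun u hu => by simp [hu])
  have h3 : (∏ u, ((lam u * (act (psi E r) u : ℝ)) / (∑ v, lam v * (act (psi E r) v : ℝ))) ^ rep (psi E r) u)
      = ∏ u ∈ E, (lam u / ∑ v ∈ E, lam v) ^ r u := by
    rw [show (∑ v, lam v * (act (psi E r) v : ℝ)) = ∑ v ∈ E, lam v from hlamE]
    simp only [hrep, hact]
    rw [← Finset.prod_subset (Finset.subset_univ E) (fun x _ hx => by simp [hzero x hx])]
    exact Finset.prod_congr rfl (fun u hu => by simp [hu])
  rw [h1, h2, h3]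

end aux

lemma hM_inner_sum {p : ℕ} (s : ℕ) (lam : Fin p → ℝ) (hlam : ∀ j, 0 < lam j)
    (E : Finset (Fin p)) (hE : E.Nonempty) :
    ∑ r ∈ Finset.piAntidiag E s,
      (Nat.multinomial E r : ℝ) * ∏ u ∈ E, (lam u / ∑ v ∈ E, lam v) ^ r u = 1 := by
  rw [← Finset.sum_pow_eq_sum_piAntidiag E (fun u => lam u / ∑ v ∈ E, lam v) s]
  have hL : (0:ℝ) < ∑ v ∈ E, lam v := Finset.sum_pos (fun v _ => hlam v) hE
  rw [← Finset.sum_div, div_self hL.ne', one_pow]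

lemma outer_sum {p : ℕ} (q : Fin p → ℝ) (j : Fin p) :
    ∑ E ∈ Finset.univ.powerset.filter (fun E => j ∈ E),
      ((∏ u ∈ E, q u) * ∏ u ∈ Eᶜ, (1 - q u)) = q j := by
  classical
  have hsplit := Finset.sum_filter_add_sum_filter_not
    ((Finset.univ : Finset (Fin p)).powerset)
    (fun E => j ∈ E) (fun E => (∏ u ∈ E, q u) * ∏ u ∈ Eᶜ, (1 - q u))
  have htot : ∑ E ∈ (Finset.univ : Finset (Fin p)).powerset,
      ((∏ u ∈ E, q u) * ∏ u ∈ Eᶜ, (1 - q u)) = 1 := by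
    have h := Finset.prod_add q (fun u => 1 - q u) (Finset.univ : Finset (Fin p))
    simp only [add_sub_cancel, Finset.prod_const_one] at h
    rw [Finset.sum_congr rfl (fun E _ => by
      rw [Finset.compl_eq_univ_sdiff] :
      ∀ E ∈ (Finset.univ : Finset (Fin p)).powerset,
        ((∏ u ∈ E, q u) * ∏ u ∈ Eᶜ, (1 - q u))
        = (∏ u ∈ E, q u) * ∏ u ∈ Finset.univ \ E, (1 - q u))]
    exact h.symm
  have hno : ∑ E ∈ (Finset.univ : Finset (Fin p)).powerset.filter (fun E => j ∉ E),
      ((∏ u ∈ E, q u) * ∏ u ∈ Eᶜ, (1 - q u)) = 1 - q j := by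
    have hset : (Finset.univ : Finset (Fin p)).powerset.filter (fun E => j ∉ E)
        = (Finset.univ.erase j).powerset := by
      ext E
      simp [Finset.subset_erase]
    rw [hset]
    have hterm : ∀ E ∈ (Finset.univ.erase j).powerset,
        ((∏ u ∈ E, q u) * ∏ u ∈ Eᶜ, (1 - q u))
        = (1 - q j) * ((∏ u ∈ E, q u) * ∏ u ∈ (Finset.univ.erase j) \ E, (1 - q u)) := by
      intro E hE
      rw [Finset.mem_powerset] at hE
      have hj : j ∈ Eᶜ := by
        simp only [Finset.mem_compl]
        intro hjE
        exact (Finset.mem_erase.mp (hE hjE)).1 rfl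
      rw [← Finset.prod_erase_mul Eᶜ _ hj]
      have heq : Eᶜ.erase j = (Finset.univ.erase j) \ E := by
        ext u
        simp only [Finset.mem_erase, Finset.mem_compl, Finset.mem_sdiff, Finset.mem_univ,
          true_and]
        tauto
      rw [heq]; ring
    rw [Finset.sum_congr rfl hterm, ← Finset.mul_sum]
    have h := Finset.prod_add q (fun u => 1 - q u) (Finset.univ.erase j)
    simp only [add_sub_cancel, Finset.prod_const_one] at h
    rw [h.symm, mul_one]
  linarith [hsplit, htot, hno]


/-- under the H-Multinomial law, each word `j` appears (`D_j > 0`)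
with probability `q_j`. -/
theorem hPMF_marginal_activation (p : ℕ) (hp : 1 ≤ p) (s : ℕ) (q lam : Fin p → ℝ)
    (hq : ∀ j, 0 < q j ∧ q j < 1) (hlam : ∀ j, 0 < lam j)
    (hlamsum : ∑ j, lam j = (p : ℝ)) (j : Fin p) :
    ∑' d : Fin p → ℕ, (if 0 < d j then hPMF s q lam d else 0) = q j := by
  classical
  set F : Finset (Fin p → ℕ) := Fintype.piFinset (fun _ : Fin p => Finset.range (s+2)) with hFdef
  have hF : ∀ d ∉ F, (if 0 < d j then hPMF s q lam d else 0) = 0 := by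
    intro d hd
    by_cases hdj : 0 < d j
    · simp only [if_pos hdj]
      simp only [hFdef, Fintype.mem_piFinset, Finset.mem_range, not_forall, not_lt] at hd
      obtain ⟨u, hu⟩ := hd
      have hd0 : d ≠ 0 := fun h => by simp [h] at hdj
      have hrep : ¬ ((∑ v, rep d v) = s) := by
        have h1 : s + 1 ≤ rep d u := by unfold rep act; split <;> omega
        have h2 : rep d u ≤ ∑ v, rep d v :=
          Finset.single_le_sum (fun _ _ => Nat.zero_le _) (Finset.mem_univ u)
        omega
      simp [hPMF, hd0, hrep]
    · simp [hdj]
  rw [tsum_eq_sum hF]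
  -- restrict to the support
  have hfilter : ∑ d ∈ F.filter (fun d => 0 < d j ∧ (∑ v, rep d v) = s),
      (if 0 < d j then hPMF s q lam d else 0)
      = ∑ d ∈ F, (if 0 < d j then hPMF s q lam d else 0) := by
    apply Finset.sum_filter_of_ne
    intro d _ hne
    by_cases hdj : 0 < d j
    · refine ⟨hdj, ?_⟩
      rw [if_pos hdj] at hne
      have hd0 : d ≠ 0 := fun h => by simp [h] at hdj
      by_contra hs
      simp [hPMF, hd0, hs] at hne
    · simp [hdj] at hne
  rw [← hfilter]
  set S : Finset ((_ : Finset (Fin p)) × (Fin p → ℕ)) :=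
    (Finset.univ.powerset.filter (fun E => j ∈ E)).sigma
      (fun E => Finset.piAntidiag E s) with hSdef
  have key : ∑ d ∈ F.filter (fun d => 0 < d j ∧ (∑ v, rep d v) = s),
      (if 0 < d j then hPMF s q lam d else 0)
      = ∑ x ∈ S, hPMF s q lam (psi x.1 x.2) := by
    apply Finset.sum_nbij'
      (i := fun d => (⟨Finset.univ.filter (fun u => 0 < d u), rep d⟩ :
        (_ : Finset (Fin p)) × (Fin p → ℕ)))
      (j := fun x => psi x.1 x.2)
    · -- hi : maps into S
      intro d hd
      rw [Finset.mem_filter] at hd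
      obtain ⟨hdF, hdj, hdsum⟩ := hd
      refine Finset.mem_sigma.mpr ⟨Finset.mem_filter.mpr
        ⟨Finset.mem_powerset.mpr (Finset.subset_univ _),
          Finset.mem_filter.mpr ⟨Finset.mem_univ j, hdj⟩⟩,
        Finset.mem_piAntidiag.mpr ⟨?_, ?_⟩⟩
      · rw [← hdsum]
        exact Finset.sum_subset (Finset.filter_subset _ _) (fun x _ hx => by
          simp only [Finset.mem_filter, Finset.mem_univ, true_and, not_lt,
            Nat.le_zero] at hx
          simp [rep, act, hx])
      · intro u hu
        simp only [Finset.mem_filter, Finset.mem_univ, true_and]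
        by_contra h
        simp only [not_lt, Nat.le_zero] at h
        exact hu (by simp [rep, act, h])
    · -- hj : maps into F'
      intro x hx
      simp only [hSdef, Finset.mem_sigma, Finset.mem_filter, Finset.mem_powerset,
        Finset.mem_piAntidiag] at hx
      obtain ⟨⟨_, hjx⟩, hxsum, hxsupp⟩ := hx
      have hrb : ∀ u, x.2 u ≤ s := by
        intro u
        by_cases h : u ∈ x.1
        · rw [← hxsum]
          exact Finset.single_le_sum (fun _ _ => Nat.zero_le _) h
        · have : x.2 u = 0 := by by_contra hc; exact h (hxsupp u hc)
          omega
      rw [Finset.mem_filter]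
      refine ⟨?_, ?_, ?_⟩
      · simp only [hFdef, Fintype.mem_piFinset, Finset.mem_range]
        intro u
        have := hrb u
        unfold psi
        split <;> omega
      · unfold psi
        simp [hjx]
      · have := rep_psi x.1 x.2 hxsupp
        simp only [this]
        rw [← hxsum]
        exact Finset.sum_subset (Finset.subset_univ _) (fun u _ hu => by
          by_contra hc; exact hu (hxsupp u hc)) |>.symm
    · -- left inverse
      intro d hd
      exact psi_act_rep d
    · -- right inverse
      intro x hx
      simp only [hSdef, Finset.mem_sigma, Finset.mem_filter, Finset.mem_powerset,
        Finset.mem_piAntidiag] at hx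
      obtain ⟨⟨_, hjx⟩, hxsum, hxsupp⟩ := hx
      have h1 : Finset.univ.filter (fun u => 0 < psi x.1 x.2 u) = x.1 := by
        ext u
        simp only [Finset.mem_filter, Finset.mem_univ, true_and]
        unfold psi
        constructor
        · intro h
          by_contra hc
          have : x.2 u = 0 := by by_contra hc2; exact hc (hxsupp u hc2)
          simp [hc, this] at h
        · intro h; simp [h]
      have h2 : rep (psi x.1 x.2) = x.2 := funext (rep_psi x.1 x.2 hxsupp)
      obtain ⟨E, r⟩ := x
      simp only at h1 h2 ⊢
      exact Sigma.ext h1 (heq_of_eq h2)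
    · -- terms agree
      intro d hd
      rw [Finset.mem_filter] at hd
      obtain ⟨hdF, hdj, hdsum⟩ := hd
      rw [if_pos hdj]
      conv_lhs => rw [← psi_act_rep d]
  rw [key, hSdef, Finset.sum_sigma]
  have hterm : ∀ E ∈ Finset.univ.powerset.filter (fun E => j ∈ E),
      ∑ r ∈ Finset.piAntidiag E s, hPMF s q lam (psi E r)
      = (∏ u ∈ E, q u) * ∏ u ∈ Eᶜ, (1 - q u) := by
    intro E hE
    rw [Finset.mem_filter] at hE
    have hEne : E.Nonempty := ⟨j, hE.2⟩
    rw [Finset.sum_congr rfl (fun r hr => hPMF_psi s q lam E hEne r hr)]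
    rw [Finset.sum_congr rfl (fun r _ => by ring :
      ∀ r ∈ Finset.piAntidiag E s,
        (Nat.multinomial E r : ℝ) * ((∏ u ∈ E, q u) * ∏ u ∈ Eᶜ, (1 - q u)) *
          ∏ u ∈ E, (lam u / ∑ v ∈ E, lam v) ^ r u
        = ((∏ u ∈ E, q u) * ∏ u ∈ Eᶜ, (1 - q u)) *
            ((Nat.multinomial E r : ℝ) * ∏ u ∈ E, (lam u / ∑ v ∈ E, lam v) ^ r u))]
    rw [← Finset.mul_sum, hM_inner_sum s lam hlam E hEne, mul_one]
  rw [Finset.sum_congr rfl hterm]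
  exact outer_sum q j
end

section
/- Let D be distributed according to the H-Multinomial distribution with parameters (s, q, λ). Fix any nonzero ε ∈ {0,1}^p and any ρ ∈ ℕ^p with ρ_j = 0 whenever ε_j = 0 and Σ_{j=1}^p ρ_j = s. Then the conditional probability P(D = ε + ρ | e(D) = ε) equals (s! / ∏_j ρ_j!) · ∏_{j : ε_j = 1} (λ_j / Σ_u λ_u ε_u)^{ρ_j}; that is, conditional on the activation pattern ε, the repetition vector r(D) = D − ε follows the Multinomial(s, θ(ε)) distribution with θ_j(ε) = λ_j ε_j / Σ_u λ_u ε_u. -/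
open scoped BigOperators

section aux

variable {p : ℕ} (s : ℕ) (q lam : Fin p → ℝ) (ε : Fin p → ℕ)

lemma act_add_eq (hε : ∀ j, ε j ≤ 1) (r : Fin p → ℕ) (hr : ∀ j, ε j = 0 → r j = 0) :
    act (ε + r) = ε := by
  funext j
  rcases Nat.le_one_iff_eq_zero_or_eq_one.mp (hε j) with h | h
  · simp [act, h, hr j h]
  · simp only [act, Pi.add_apply, h]
    rw [if_pos (by omega)]

lemma rep_add_eq (hε : ∀ j, ε j ≤ 1) (r : Fin p → ℕ) (hr : ∀ j, ε j = 0 → r j = 0) :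
    rep (ε + r) = r := by
  funext j
  have := congrFun (act_add_eq ε hε r hr) j
  simp only [rep, this, Pi.add_apply]
  omega

lemma key_eval (hε : ∀ j, ε j ≤ 1) (hεne : ε ≠ 0) (r : Fin p → ℕ) (hrs : ∑ j, r j = s) :
    (if act (ε + r) = ε then hPMF s q lam (ε + r) else 0)
      = (∏ j, (q j) ^ ε j * (1 - q j) ^ (1 - ε j)) *
        (((s.factorial : ℝ) / ∏ j, ((r j).factorial : ℝ)) *
          ∏ j, ((lam j * (ε j : ℝ)) / (∑ u, lam u * (ε u : ℝ))) ^ r j) := by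
  by_cases hsupp : ∀ j, ε j = 0 → r j = 0
  · have hact : act (ε + r) = ε := act_add_eq ε hε r hsupp
    have hrep : rep (ε + r) = r := rep_add_eq ε hε r hsupp
    have hne : ε + r ≠ 0 := by
      intro h
      apply hεne
      funext j
      have := congrFun h j
      simp only [Pi.add_apply, Pi.zero_apply] at this ⊢
      omega
    rw [if_pos hact, hPMF, if_neg hne, hrep, hact, if_pos hrs]
    ring
  · push_neg at hsupp
    obtain ⟨j, hj0, hjr⟩ := hsupp
    have hact : act (ε + r) ≠ ε := by
      intro h
      have := congrFun h j
      simp [act, hj0, Nat.pos_of_ne_zero hjr] at this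
    rw [if_neg hact]
    have : ((lam j * (ε j : ℝ)) / (∑ u, lam u * (ε u : ℝ))) ^ r j = 0 := by
      simp [hj0, zero_pow hjr]
    have hz : (∏ j, ((lam j * (ε j : ℝ)) / (∑ u, lam u * (ε u : ℝ))) ^ r j) = 0 :=
      Finset.prod_eq_zero (Finset.mem_univ j) this
    rw [hz]
    ring

end aux

section main

variable {p : ℕ} (s : ℕ) (q lam : Fin p → ℝ) (ε : Fin p → ℕ)

lemma T_pos (hlam : ∀ j, 0 < lam j) (hε : ∀ j, ε j ≤ 1) (hεne : ε ≠ 0) :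
    0 < ∑ u, lam u * (ε u : ℝ) := by
  obtain ⟨j, hj⟩ := Function.ne_iff.mp hεne
  have hj1 : ε j = 1 := by have := hε j; simp only [Pi.zero_apply] at hj; omega
  refine Finset.sum_pos' (fun u _ => mul_nonneg (hlam u).le (Nat.cast_nonneg _)) ⟨j, Finset.mem_univ j, ?_⟩
  rw [hj1]; simpa using hlam j

lemma theta_sum_one (hlam : ∀ j, 0 < lam j) (hε : ∀ j, ε j ≤ 1) (hεne : ε ≠ 0) :
    ∑ j, (lam j * (ε j : ℝ)) / (∑ u, lam u * (ε u : ℝ)) = 1 := by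
  rw [← Finset.sum_div]
  exact div_self (ne_of_gt (T_pos lam ε hlam hε hεne))

lemma multinomial_cast (r : Fin p → ℕ) (hrs : ∑ j, r j = s) :
    (s.factorial : ℝ) / ∏ j, ((r j).factorial : ℝ) = (Nat.multinomial Finset.univ r : ℝ) := by
  have hspec := Nat.multinomial_spec Finset.univ r
  rw [hrs] at hspec
  have hprodne : (∏ j, ((r j).factorial : ℝ)) ≠ 0 := by
    apply Finset.prod_ne_zero_iff.mpr
    intro j _
    exact_mod_cast (Nat.factorial_pos (r j)).ne'
  rw [div_eq_iff hprodne, ← Nat.cast_prod, ← Nat.cast_mul, mul_comm, hspec]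

lemma denom_eq (hq : ∀ j, 0 < q j ∧ q j < 1) (hlam : ∀ j, 0 < lam j)
    (hε : ∀ j, ε j ≤ 1) (hεne : ε ≠ 0) :
    (∑' d : Fin p → ℕ, (if act d = ε then hPMF s q lam d else 0))
      = ∏ j, (q j) ^ ε j * (1 - q j) ^ (1 - ε j) := by
  classical
  set S : Finset (Fin p → ℕ) :=
    (Finset.piAntidiag Finset.univ s).image (fun r => ε + r) with hS
  have hsupp : ∀ d ∉ S, (if act d = ε then hPMF s q lam d else 0) = 0 := by
    intro d hd
    by_contra hne
    have hact : act d = ε := by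
      by_contra h; rw [if_neg h] at hne; exact hne rfl
    rw [if_pos hact] at hne
    have hd0 : d ≠ 0 := by
      intro h0
      obtain ⟨j, hj⟩ := Function.ne_iff.mp hεne
      have : act d j = ε j := congrFun hact j
      simp [act, h0] at this
      exact hj this.symm
    have hsum : ∑ j, rep d j = s := by
      by_contra h
      rw [hPMF, if_neg hd0, if_neg h] at hne
      exact hne rfl
    apply hd
    rw [hS]
    apply Finset.mem_image.mpr
    refine ⟨rep d, Finset.mem_piAntidiag.mpr ⟨by simpa using hsum, fun i _ => Finset.mem_univ i⟩, ?_⟩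
    funext j
    have hj : act d j = ε j := congrFun hact j
    simp only [Pi.add_apply, ← hj, rep, act]
    split <;> omega
  rw [tsum_eq_sum hsupp, hS,
    Finset.sum_image (fun r _ r' _ h => add_right_injective ε h)]
  have heval : ∀ r ∈ Finset.piAntidiag Finset.univ s,
      (if act (ε + r) = ε then hPMF s q lam (ε + r) else 0)
        = (∏ j, (q j) ^ ε j * (1 - q j) ^ (1 - ε j)) *
          ((Nat.multinomial Finset.univ r : ℝ) *
            ∏ j, ((lam j * (ε j : ℝ)) / (∑ u, lam u * (ε u : ℝ))) ^ r j) := by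
    intro r hr
    have hrs : ∑ j, r j = s := ((Finset.mem_piAntidiag.mp hr).1 : _)
    rw [key_eval s q lam ε hε hεne r hrs, multinomial_cast s r hrs]
  rw [Finset.sum_congr rfl heval, ← Finset.mul_sum,
    ← Finset.sum_pow_eq_sum_piAntidiag Finset.univ
      (fun j => (lam j * (ε j : ℝ)) / (∑ u, lam u * (ε u : ℝ))) s,
    theta_sum_one lam ε hlam hε hεne, one_pow, mul_one]

end main

/-- conditional on the activation pattern `ε ≠ 0`, the repetition vector
follows the `Multinomial(s, θ(ε))` law with `θ_j(ε) = λ_j ε_j / Σ_u λ_u ε_u`; i.e. the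
conditional probability of `D = ε + ρ` given `e(D) = ε` equals
`(s! / ∏_j ρ_j!) ∏_{j : ε_j = 1} (λ_j / Σ_u λ_u ε_u)^{ρ_j}`. -/
theorem hPMF_conditional_multinomial (p : ℕ) (hp : 1 ≤ p) (s : ℕ) (q lam : Fin p → ℝ)
    (hq : ∀ j, 0 < q j ∧ q j < 1) (hlam : ∀ j, 0 < lam j)
    (hlamsum : ∑ j, lam j = (p : ℝ))
    (ε : Fin p → ℕ) (hε : ∀ j, ε j ≤ 1) (hεne : ε ≠ 0)
    (ρ : Fin p → ℕ) (hρ : ∀ j, ε j = 0 → ρ j = 0) (hρs : ∑ j, ρ j = s) :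
    hPMF s q lam (ε + ρ) / (∑' d : Fin p → ℕ, (if act d = ε then hPMF s q lam d else 0))
      = ((s.factorial : ℝ) / ∏ j, ((ρ j).factorial : ℝ)) *
          ∏ j ∈ Finset.univ.filter (fun j => ε j = 1),
            (lam j / ∑ u, lam u * (ε u : ℝ)) ^ ρ j := by
  classical
  have hCpos : 0 < ∏ j, (q j) ^ ε j * (1 - q j) ^ (1 - ε j) := by
    apply Finset.prod_pos
    intro j _
    have h1 := (hq j).1
    have h2 : (0:ℝ) < 1 - q j := by linarith [(hq j).2]
    exact mul_pos (pow_pos h1 _) (pow_pos h2 _)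
  have hnum : hPMF s q lam (ε + ρ)
      = (∏ j, (q j) ^ ε j * (1 - q j) ^ (1 - ε j)) *
        (((s.factorial : ℝ) / ∏ j, ((ρ j).factorial : ℝ)) *
          ∏ j, ((lam j * (ε j : ℝ)) / (∑ u, lam u * (ε u : ℝ))) ^ ρ j) := by
    have := key_eval s q lam ε hε hεne ρ hρs
    rwa [if_pos (act_add_eq ε hε ρ hρ)] at this
  rw [hnum, denom_eq s q lam ε hq hlam hε hεne, mul_comm, mul_div_assoc,
    div_self (ne_of_gt hCpos), mul_one]
  congr 1
  rw [← Finset.prod_filter_mul_prod_filter_not Finset.univ (fun j => ε j = 1)]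
  have h2 : ∏ j ∈ Finset.univ.filter (fun j => ¬ ε j = 1),
      ((lam j * (ε j : ℝ)) / (∑ u, lam u * (ε u : ℝ))) ^ ρ j = 1 := by
    apply Finset.prod_eq_one
    intro j hj
    have hj0 : ε j = 0 := by have := hε j; simp only [Finset.mem_filter] at hj; omega
    rw [hρ j hj0, pow_zero]
  rw [h2, mul_one]
  apply Finset.prod_congr rfl
  intro j hj
  have hj1 : ε j = 1 := (Finset.mem_filter.mp hj).2
  rw [hj1]
  norm_num
end

section
/- Let D be distributed according to the H-Multinomial distribution with parameters (s, q, λ). Then for every nonzero ε ∈ {0,1}^p and every coordinate j ∈ {1,…,p}, the conditional expectation of D_j given that the activation pattern e(D) equals ε is E[D_j | e(D) = ε] = ε_j · (1 + s λ_j / Σ_{u=1}^p λ_u ε_u). -/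
open scoped BigOperators

lemma multinomial_cast_real {p : ℕ} (S : Finset (Fin p)) (k : Fin p → ℕ)
    (hk : ∀ u, u ∉ S → k u = 0) :
    (Nat.multinomial S k : ℝ)
      = ((∑ u ∈ S, k u).factorial : ℝ) / ∏ u, ((k u).factorial : ℝ) := by
  have h1 : ∏ u, ((k u).factorial : ℝ) = ∏ u ∈ S, ((k u).factorial : ℝ) :=
    (Finset.prod_subset (Finset.subset_univ S) (fun x _ hx => by
      rw [hk x hx, Nat.factorial_zero, Nat.cast_one])).symm
  have h3 : (0:ℝ) < ∏ u ∈ S, ((k u).factorial : ℝ) :=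
    Finset.prod_pos fun u _ => by positivity
  rw [h1, eq_div_iff h3.ne']
  have h2 := Nat.multinomial_spec S k
  push_cast [← h2]
  ring

lemma shift_sum {p : ℕ} (S : Finset (Fin p)) (π : Fin p → ℝ) (j : Fin p) (hj : j ∈ S) (n : ℕ) :
    ∑ k ∈ Finset.piAntidiag S (n+1),
        (k j : ℝ) * ((Nat.multinomial S k : ℝ) * ∏ u ∈ S, π u ^ k u)
      = ((n:ℝ)+1) * π j *
        ∑ m ∈ Finset.piAntidiag S n,
          (Nat.multinomial S m : ℝ) * ∏ u ∈ S, π u ^ m u := by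
  classical
  rw [Finset.mul_sum]
  rw [← Finset.sum_filter_of_ne
    (p := fun k : Fin p → ℕ => k j ≠ 0)
    (fun k _ hne => by
      intro hkj
      exact hne (by simp [hkj]))]
  refine (Finset.sum_nbij'
    (i := fun m => fun u => m u + if u = j then 1 else 0)
    (j := fun k => fun u => k u - if u = j then 1 else 0)
    ?_ ?_ ?_ ?_ ?_).symm
  · -- hi : m ∈ piAntidiag S n → m+δ ∈ filter
    intro m hm
    rw [Finset.mem_piAntidiag] at hm
    rw [Finset.mem_filter, Finset.mem_piAntidiag]
    refine ⟨⟨?_, ?_⟩, by simp⟩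
    · rw [Finset.sum_add_distrib, hm.1, Finset.sum_ite_eq' S j (fun _ => 1), if_pos hj]
    · intro u hu
      by_cases h : u = j
      · exact h ▸ hj
      · exact hm.2 u (by simpa [h] using hu)
  · -- hj : k ∈ filter → k-δ ∈ piAntidiag S n
    intro k hk
    rw [Finset.mem_filter, Finset.mem_piAntidiag] at hk
    obtain ⟨⟨hsum, hsupp⟩, hkj⟩ := hk
    rw [Finset.mem_piAntidiag]
    beta_reduce
    constructor
    · have e1 : ∑ u ∈ S, k u = k j + ∑ u ∈ S.erase j, k u :=
        (Finset.add_sum_erase S k hj).symm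
      have e2 : ∑ u ∈ S, (k u - if u = j then 1 else 0)
          = (k j - 1) + ∑ u ∈ S.erase j, k u := by
        rw [← Finset.add_sum_erase _ _ hj, if_pos rfl]
        congr 1
        refine Finset.sum_congr rfl fun u hu => ?_
        rw [if_neg (Finset.ne_of_mem_erase hu), Nat.sub_zero]
      have e0 : k j + ∑ u ∈ S.erase j, k u = n + 1 := by rw [← e1]; exact hsum
      rw [e2]
      omega
    · intro u hu
      by_cases h : u = j
      · exact h ▸ hj
      · exact hsupp u (by simpa [h] using hu)
  · intro m hm
    funext u
    by_cases h : u = j <;> simp [h]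
  · intro k hk
    rw [Finset.mem_filter] at hk
    funext u
    by_cases h : u = j
    · subst h; simp; omega
    · simp [h]
  · -- term equality
    intro m hm
    have hmem := Finset.mem_piAntidiag.mp hm
    have hmem' : (fun u => m u + if u = j then 1 else 0) ∈ Finset.piAntidiag S (n+1) := by
      rw [Finset.mem_piAntidiag]
      refine ⟨?_, ?_⟩
      · rw [Finset.sum_add_distrib, hmem.1, Finset.sum_ite_eq' S j (fun _ => 1), if_pos hj]
      · intro u hu
        by_cases h : u = j
        · exact h ▸ hj
        · exact hmem.2 u (by simpa [h] using hu)
    have hmem'' := Finset.mem_piAntidiag.mp hmem'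
    rw [multinomial_cast_real S m (fun u hu => by
        by_contra h; exact hu (hmem.2 u h)),
      multinomial_cast_real S _ (fun u hu => by
        by_contra h; exact hu (hmem''.2 u h)),
      hmem.1, hmem''.1]
    -- split products at j
    have p1 : ∏ u, (((m u + if u = j then 1 else 0)).factorial : ℝ)
        = ((m j + 1).factorial : ℝ) * ∏ u ∈ Finset.univ.erase j, ((m u).factorial : ℝ) := by
      rw [← Finset.mul_prod_erase Finset.univ _ (Finset.mem_univ j), if_pos rfl]
      congr 1
      refine Finset.prod_congr rfl fun u hu => by
        rw [if_neg (Finset.ne_of_mem_erase hu), Nat.add_zero]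
    have p2 : ∏ u, ((m u).factorial : ℝ)
        = ((m j).factorial : ℝ) * ∏ u ∈ Finset.univ.erase j, ((m u).factorial : ℝ) :=
      (Finset.mul_prod_erase Finset.univ _ (Finset.mem_univ j)).symm
    have p3 : ∏ u ∈ S, π u ^ (m u + if u = j then 1 else 0)
        = π j ^ (m j + 1) * ∏ u ∈ S.erase j, π u ^ m u := by
      rw [← Finset.mul_prod_erase S _ hj, if_pos rfl]
      congr 1
      refine Finset.prod_congr rfl fun u hu => by
        rw [if_neg (Finset.ne_of_mem_erase hu), Nat.add_zero]
    have p4 : ∏ u ∈ S, π u ^ m u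
        = π j ^ m j * ∏ u ∈ S.erase j, π u ^ m u :=
      (Finset.mul_prod_erase S _ hj).symm
    rw [p1, p2, p3, p4]
    simp only [if_pos rfl]
    have hfj : ((m j).factorial : ℝ) ≠ 0 := by positivity
    have hfP : (∏ u ∈ Finset.univ.erase j, ((m u).factorial : ℝ)) ≠ 0 :=
      ne_of_gt (Finset.prod_pos fun u _ => by positivity)
    rw [Nat.factorial_succ (m j), Nat.factorial_succ n, pow_succ]
    push_cast
    field_simp

/-- conditional expectation of a coordinate given the activation pattern.
For any nonzero `ε ∈ {0,1}^p` and coordinate `j`,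
`E[D_j | e(D) = ε] = ε_j (1 + s λ_j / Σ_u λ_u ε_u)`, expressed as the ratio of the
weighted mass to the mass of the conditioning event. -/
theorem hPMF_conditional_expectation (p : ℕ) (hp : 1 ≤ p) (s : ℕ) (q lam : Fin p → ℝ)
    (hq : ∀ j, 0 < q j ∧ q j < 1) (hlam : ∀ j, 0 < lam j)
    (hlamsum : ∑ j, lam j = (p : ℝ))
    (ε : Fin p → ℕ) (hε : ∀ j, ε j ≤ 1) (hεne : ε ≠ 0) (j : Fin p) :
    (∑' d : Fin p → ℕ, (if act d = ε then (d j : ℝ) * hPMF s q lam d else 0)) /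
        (∑' d : Fin p → ℕ, (if act d = ε then hPMF s q lam d else 0))
      = (ε j : ℝ) * (1 + (s : ℝ) * lam j / ∑ u, lam u * (ε u : ℝ)) := by
  classical
  set S : Finset (Fin p) := Finset.univ.filter fun u => ε u = 1 with hS
  have hmemS : ∀ u, u ∈ S ↔ ε u = 1 := fun u => by simp [hS]
  have hepsS : ∀ u, u ∉ S → ε u = 0 := fun u hu => by
    have h1 := hε u
    have h2 := (hmemS u).not.mp hu
    omega
  set Λ : ℝ := ∑ u, lam u * (ε u : ℝ) with hΛ
  have hΛS : Λ = ∑ u ∈ S, lam u := by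
    have h : ∀ u ∈ Finset.univ, lam u * (ε u : ℝ) = if u ∈ S then lam u else 0 := by
      intro u _
      by_cases h : u ∈ S
      · simp [h, (hmemS u).mp h]
      · simp [h, hepsS u h]
    rw [hΛ, Finset.sum_congr rfl h, Finset.sum_ite_mem, Finset.univ_inter]
  have Sne : S.Nonempty := by
    obtain ⟨u, hu⟩ := Function.ne_iff.mp hεne
    refine ⟨u, (hmemS u).mpr ?_⟩
    have h1 := hε u
    simp only [Pi.zero_apply] at hu
    omega
  have hΛpos : 0 < Λ := hΛS ▸ Finset.sum_pos (fun u _ => hlam u) Sne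
  set C : ℝ := ∏ u, q u ^ ε u * (1 - q u) ^ (1 - ε u) with hC
  have hCpos : 0 < C :=
    Finset.prod_pos fun u _ =>
      mul_pos (pow_pos (hq u).1 _) (pow_pos (by linarith [(hq u).2]) _)
  have honeN : ∀ n : ℕ,
      ∑ k ∈ Finset.piAntidiag S n,
        (Nat.multinomial S k : ℝ) * ∏ u ∈ S, (lam u / Λ) ^ k u = 1 := by
    intro n
    rw [← Finset.sum_pow_eq_sum_piAntidiag, ← Finset.sum_div, ← hΛS,
      div_self hΛpos.ne', one_pow]
  have hdne : ∀ d : Fin p → ℕ, act d = ε → d ≠ 0 := by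
    intro d h h0
    apply hεne
    rw [← h, h0]
    funext u
    simp [act]
  -- the main transformation
  have main : ∀ g : (Fin p → ℕ) → ℝ,
      (∑' d : Fin p → ℕ, (if act d = ε then g d * hPMF s q lam d else 0))
        = C * ∑ k ∈ Finset.piAntidiag S s,
            g (fun u => ε u + k u) *
              ((Nat.multinomial S k : ℝ) * ∏ u ∈ S, (lam u / Λ) ^ k u) := by
    intro g
    set F : Finset (Fin p → ℕ) := Fintype.piFinset (fun _ : Fin p => Finset.range (s+2)) with hF
    have hFzero : ∀ d : Fin p → ℕ, d ∉ F →
        (if act d = ε then g d * hPMF s q lam d else 0) = 0 := by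
      intro d hd
      by_cases h : act d = ε
      · rw [if_pos h]
        obtain ⟨u, hu⟩ : ∃ u, d u ∉ Finset.range (s+2) := by
          simpa [hF, Fintype.mem_piFinset] using hd
        have hdu : s + 2 ≤ d u := by simpa [Finset.mem_range] using hu
        have hns : ¬ (∑ v, rep d v) = s := by
          intro hsum
          have h1 : rep d u ≤ ∑ v, rep d v :=
            Finset.single_le_sum (f := rep d) (fun _ _ => Nat.zero_le _) (Finset.mem_univ u)
          have h2 : s + 1 ≤ rep d u := by
            simp only [rep, act]
            split <;> omega
          omega
        have hz : hPMF s q lam d = 0 := by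
          unfold hPMF
          rw [if_neg (hdne d h), if_neg hns]
        rw [hz, mul_zero]
      · rw [if_neg h]
    rw [tsum_eq_sum hFzero]
    have hstep : ∑ d ∈ F, (if act d = ε then g d * hPMF s q lam d else 0)
        = ∑ d ∈ F.filter (fun d => act d = ε ∧ (∑ u, rep d u) = s), g d * hPMF s q lam d := by
      rw [Finset.sum_filter]
      refine Finset.sum_congr rfl fun d _ => ?_
      by_cases h1 : act d = ε
      · by_cases h2 : (∑ u, rep d u) = s
        · simp [h1, h2]
        · have hz : hPMF s q lam d = 0 := by
            unfold hPMF
            rw [if_neg (hdne d h1), if_neg h2]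
          simp [h1, h2, hz]
      · simp [h1]
    rw [hstep, Finset.mul_sum]
    have hkfacts : ∀ k ∈ Finset.piAntidiag S s,
        act (fun u => ε u + k u) = ε ∧ rep (fun u => ε u + k u) = k ∧ (∑ u, k u) = s := by
      intro k hk
      obtain ⟨hksum, hksupp⟩ := Finset.mem_piAntidiag.mp hk
      have hact : act (fun u => ε u + k u) = ε := by
        funext u
        by_cases hu : u ∈ S
        · have h1 := (hmemS u).mp hu
          simp [act, h1]
        · have h0 : k u = 0 := by
            by_contra h; exact hu (hksupp u h)
          simp [act, hepsS u hu, h0]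
      refine ⟨hact, ?_, ?_⟩
      · funext u
        have hau := congrFun hact u
        simp only [rep, hau]
        omega
      · rw [← hksum]
        exact (Finset.sum_subset (Finset.subset_univ S)
          (fun x _ hx => by by_contra h; exact hx (hksupp x h))).symm
    refine (Finset.sum_nbij' (i := fun k => fun u => ε u + k u) (j := fun d => rep d)
      ?_ ?_ ?_ ?_ ?_).symm
    · -- piAntidiag → filter
      intro k hk
      obtain ⟨hact, hrep, hsum⟩ := hkfacts k hk
      obtain ⟨hksum, hksupp⟩ := Finset.mem_piAntidiag.mp hk
      rw [Finset.mem_filter]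
      refine ⟨?_, hact, ?_⟩
      · rw [hF, Fintype.mem_piFinset]
        intro u
        rw [Finset.mem_range]
        show ε u + k u < s + 2
        have h1 : k u ≤ ∑ v, k v :=
          Finset.single_le_sum (f := k) (fun _ _ => Nat.zero_le _) (Finset.mem_univ u)
        have h2 := hε u
        omega
      · rw [hrep]
        exact hsum
    · -- filter → piAntidiag
      intro d hd
      obtain ⟨hdF, hact, hsum⟩ := Finset.mem_filter.mp hd
      have hoff : ∀ u, u ∉ S → rep d u = 0 := by
        intro u hu
        have hau : act d u = 0 := by rw [congrFun hact u]; exact hepsS u hu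
        have hd0 : d u = 0 := by
          simp only [act] at hau
          split at hau <;> omega
        simp [rep, hd0]
      rw [Finset.mem_piAntidiag]
      constructor
      · rw [Finset.sum_subset (Finset.subset_univ S) (fun x _ hx => hoff x hx)]
        exact hsum
      · intro u hu
        by_contra hns
        exact hu (hoff u hns)
    · intro k hk
      exact (hkfacts k hk).2.1
    · intro d hd
      obtain ⟨hdF, hact, hsum⟩ := Finset.mem_filter.mp hd
      funext u
      have hau := congrFun hact u
      show ε u + rep d u = d u
      simp only [rep]
      rw [← hau]
      simp only [act]
      split <;> omega
    · -- term equality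
      intro k hk
      obtain ⟨hact, hrep, hsum⟩ := hkfacts k hk
      obtain ⟨hksum, hksupp⟩ := Finset.mem_piAntidiag.mp hk
      have hd0 : (fun u => ε u + k u) ≠ (0 : Fin p → ℕ) := hdne _ hact
      have hprod : ∏ u, (lam u * ((ε u : ℕ) : ℝ) / Λ) ^ k u
          = ∏ u ∈ S, (lam u / Λ) ^ k u := by
        rw [← Finset.prod_subset (Finset.subset_univ S) (fun x _ hx => by
          have h0 : k x = 0 := by by_contra h; exact hx (hksupp x h)
          rw [h0, pow_zero])]
        exact Finset.prod_congr rfl fun u hu => by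
          rw [(hmemS u).mp hu]; norm_num
      have hmc : (Nat.multinomial S k : ℝ)
          = (s.factorial : ℝ) / ∏ u, ((k u).factorial : ℝ) := by
        rw [multinomial_cast_real S k (fun u hu => by
          by_contra h; exact hu (hksupp u h)), hksum]
      have hval : hPMF s q lam (fun u => ε u + k u)
          = ((s.factorial : ℝ) / ∏ u, ((k u).factorial : ℝ)) * C *
              ∏ u ∈ S, (lam u / Λ) ^ k u := by
        unfold hPMF
        rw [if_neg hd0, hrep, hact, if_pos hsum, ← hΛ, ← hC, hprod]
      rw [hval, hmc]
      ring
  have hnum := main fun d => (d j : ℝ)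
  have hden := main fun _ => (1 : ℝ)
  simp only [one_mul] at hden
  rw [hnum, hden, honeN s, mul_one]
  by_cases hjS : j ∈ S
  · have hεj : ε j = 1 := (hmemS j).mp hjS
    have hsplit : ∑ k ∈ Finset.piAntidiag S s,
        (((fun u => ε u + k u) j : ℕ) : ℝ) *
          ((Nat.multinomial S k : ℝ) * ∏ u ∈ S, (lam u / Λ) ^ k u)
        = 1 + (s : ℝ) * (lam j / Λ) := by
      have hterm : ∀ k ∈ Finset.piAntidiag S s,
          (((fun u => ε u + k u) j : ℕ) : ℝ) *
            ((Nat.multinomial S k : ℝ) * ∏ u ∈ S, (lam u / Λ) ^ k u)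
          = ((Nat.multinomial S k : ℝ) * ∏ u ∈ S, (lam u / Λ) ^ k u)
            + (k j : ℝ) * ((Nat.multinomial S k : ℝ) * ∏ u ∈ S, (lam u / Λ) ^ k u) := by
        intro k _
        simp only [hεj]
        push_cast
        ring
      rw [Finset.sum_congr rfl hterm, Finset.sum_add_distrib, honeN s]
      congr 1
      cases s with
      | zero => simp
      | succ n =>
        rw [shift_sum S (fun u => lam u / Λ) j hjS n, honeN n, mul_one]
        push_cast
        ring
    rw [hsplit, mul_div_cancel_left₀ _ hCpos.ne', hεj]
    push_cast
    ring
  · have hεj : ε j = 0 := hepsS j hjS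
    have hzero : ∑ k ∈ Finset.piAntidiag S s,
        (((fun u => ε u + k u) j : ℕ) : ℝ) *
          ((Nat.multinomial S k : ℝ) * ∏ u ∈ S, (lam u / Λ) ^ k u) = 0 := by
      refine Finset.sum_eq_zero fun k hk => ?_
      have hkj : k j = 0 := by
        by_contra h
        exact hjS ((Finset.mem_piAntidiag.mp hk).2 j h)
      simp [hεj, hkj]
    rw [hzero, mul_zero, zero_div, hεj]
    simp
end

section
/- Let W, W̃ ∈ ℝ^{n×K} be entrywise nonnegative matrices whose rows each sum to 1, and suppose each of W and W̃ possesses, for every k ∈ {1,…,K}, an anchor row equal to the k-th standard basis vector of ℝ^K. Let Z, Z̃ ∈ ℝ^{m×K} each have linearly independent columns. If W Zᵀ = W̃ Z̃ᵀ, then there exists a K×K permutation matrix R such that Z̃ = Z R and W̃ = W R; that is, the factorization is unique up to a common permutation of the K columns. -/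
open scoped BigOperators
open Matrix

/-- The `K × K` permutation matrix associated with a permutation `σ`. -/
def permMatrix {K : ℕ} (σ : Equiv.Perm (Fin K)) : Matrix (Fin K) (Fin K) ℝ :=
  fun i j => if σ i = j then 1 else 0

/-- uniqueness of the anchored row-stochastic factorization up to a common
permutation of the `K` columns: if `W, W̃` are row stochastic with anchor rows for all
topics, `Z, Z̃` have linearly independent columns, and `W Zᵀ = W̃ Z̃ᵀ`, then there is a
permutation matrix `R` with `Z̃ = Z R` and `W̃ = W R`. -/
theorem anchored_factorization_unique (n m K : ℕ)
    (W W' : Matrix (Fin n) (Fin K) ℝ) (Z Z' : Matrix (Fin m) (Fin K) ℝ)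
    (hWnn : ∀ i k, 0 ≤ W i k) (hWrow : ∀ i, ∑ k, W i k = 1)
    (hW'nn : ∀ i k, 0 ≤ W' i k) (hW'row : ∀ i, ∑ k, W' i k = 1)
    (hanchor : ∀ k : Fin K, ∃ i : Fin n, ∀ k' : Fin K, W i k' = if k' = k then 1 else 0)
    (hanchor' : ∀ k : Fin K, ∃ i : Fin n, ∀ k' : Fin K, W' i k' = if k' = k then 1 else 0)
    (hZ : LinearIndependent ℝ (fun k : Fin K => fun j : Fin m => Z j k))
    (hZ' : LinearIndependent ℝ (fun k : Fin K => fun j : Fin m => Z' j k))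
    (heq : W * Zᵀ = W' * Z'ᵀ) :
    ∃ σ : Equiv.Perm (Fin K), Z' = Z * permMatrix σ ∧ W' = W * permMatrix σ := by
  classical
  set z : Fin K → (Fin m → ℝ) := fun k j => Z j k with hzdef
  set z' : Fin K → (Fin m → ℝ) := fun k j => Z' j k with hz'def
  choose i₁ hi₁ using hanchor
  choose i₂ hi₂ using hanchor'
  -- linear independence helper
  have hZind : ∀ c d : Fin K → ℝ, (∑ k, c k • z k) = (∑ k, d k • z k) → c = d := by
    intro c d h
    have hli := Fintype.linearIndependent_iff.mp hZ (c - d) ?_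
    · funext k
      have := hli k
      simp only [Pi.sub_apply, sub_eq_zero] at this
      exact this
    · have : ∑ k, (c - d) k • z k = (∑ k, c k • z k) - (∑ k, d k • z k) := by
        rw [← Finset.sum_sub_distrib]
        congr 1; funext k; simp [sub_smul]
      rw [this, h, sub_self]
  -- entrywise equality
  have heq' : ∀ i j, ∑ l, W i l * Z j l = ∑ l, W' i l * Z' j l := by
    intro i j
    have := congrFun (congrFun heq i) j
    simpa [Matrix.mul_apply, Matrix.transpose_apply] using this
  set A : Matrix (Fin K) (Fin K) ℝ := fun k l => W' (i₁ k) l with hAdef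
  set C : Matrix (Fin K) (Fin K) ℝ := fun k l => W (i₂ k) l with hCdef
  have hArow : ∀ k, ∑ l, A k l = 1 := fun k => hW'row (i₁ k)
  have hCrow : ∀ k, ∑ l, C k l = 1 := fun k => hWrow (i₂ k)
  have hAnn : ∀ k l, 0 ≤ A k l := fun k l => hW'nn (i₁ k) l
  have hCnn : ∀ k l, 0 ≤ C k l := fun k l => hWnn (i₂ k) l
  -- z k = ∑ l, A k l • z' l
  have hzA : ∀ k, z k = ∑ l, A k l • z' l := by
    intro k
    funext j
    have h1 := heq' (i₁ k) j
    have h2 : ∑ l, W (i₁ k) l * Z j l = Z j k := by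
      simp only [hi₁ k]
      simp [ite_mul]
    rw [h2] at h1
    simp only [Finset.sum_apply, Pi.smul_apply, smul_eq_mul]
    exact h1
  -- z' k = ∑ l, C k l • z l
  have hz'C : ∀ k, z' k = ∑ l, C k l • z l := by
    intro k
    funext j
    have h1 := heq' (i₂ k) j
    have h2 : ∑ l, W' (i₂ k) l * Z' j l = Z' j k := by
      simp only [hi₂ k]
      simp [ite_mul]
    rw [h2] at h1
    simp only [Finset.sum_apply, Pi.smul_apply, smul_eq_mul]
    exact h1.symm
  -- A * C = 1
  have hAC : A * C = 1 := by
    ext k j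
    have hc : ∑ l, (fun l => (A * C) k l) l • z l = ∑ l, (fun l => (1 : Matrix (Fin K) (Fin K) ℝ) k l) l • z l := by
      have lhs : ∑ l, (A * C) k l • z l = z k := by
        calc ∑ l, (A * C) k l • z l
            = ∑ l, (∑ p, A k p * C p l) • z l := by
              simp [Matrix.mul_apply]
          _ = ∑ l, ∑ p, (A k p * C p l) • z l := by
              congr 1; funext l; rw [Finset.sum_smul]
          _ = ∑ p, ∑ l, (A k p * C p l) • z l := Finset.sum_comm
          _ = ∑ p, A k p • ∑ l, C p l • z l := by
              congr 1; funext p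
              rw [Finset.smul_sum]
              congr 1; funext l
              exact (smul_smul _ _ _).symm
          _ = ∑ p, A k p • z' p := by
              congr 1; funext p; rw [← hz'C p]
          _ = z k := (hzA k).symm
      have rhs : ∑ l, (1 : Matrix (Fin K) (Fin K) ℝ) k l • z l = z k := by
        simp [Matrix.one_apply]
      simpa using lhs.trans rhs.symm
    exact congrFun (hZind _ _ hc) j
  have hCA : C * A = 1 := mul_eq_one_comm.mp hAC
  -- each row of A has a nonzero entry
  have hex : ∀ k, ∃ l, A k l ≠ 0 := by
    intro k
    by_contra h
    push_neg at h
    have := hArow k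
    simp only [h] at this
    simp at this
  -- if A k l ≠ 0 then row l of C is e_k
  have hCrowE : ∀ k l, A k l ≠ 0 → ∀ j, C l j = if j = k then 1 else 0 := by
    intro k l hkl
    have h0 : ∀ j, j ≠ k → C l j = 0 := by
      intro j hjk
      have h1 : (A * C) k j = 0 := by
        rw [hAC, Matrix.one_apply_ne (Ne.symm hjk)]
      rw [Matrix.mul_apply] at h1
      have h2 := (Finset.sum_eq_zero_iff_of_nonneg
        (fun p _ => mul_nonneg (hAnn k p) (hCnn p j))).mp h1 l (Finset.mem_univ l)
      rcases mul_eq_zero.mp h2 with h3 | h3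
      · exact absurd h3 hkl
      · exact h3
    intro j
    by_cases hj : j = k
    · subst hj
      have := hCrow l
      rw [Finset.sum_eq_single j (fun b _ hb => h0 b hb) (by simp)] at this
      simp [this]
    · simp [hj, h0 j hj]
  -- uniqueness of nonzero entry in row k of A
  have huniq : ∀ k l l', A k l ≠ 0 → A k l' ≠ 0 → l = l' := by
    intro k l l' h h'
    by_contra hne
    have h1 : (C * A) l l' = 0 := by rw [hCA, Matrix.one_apply_ne hne]
    rw [Matrix.mul_apply] at h1
    have h2 : ∑ j, C l j * A j l' = A k l' := by
      have := hCrowE k l h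
      simp only [this, ite_mul, one_mul, zero_mul]
      simp
    rw [h2] at h1
    exact h' h1
  set f : Fin K → Fin K := fun k => (hex k).choose with hfdef
  have hf : ∀ k, A k (f k) ≠ 0 := fun k => (hex k).choose_spec
  -- A is the permutation matrix of f
  have hAperm : ∀ k j, A k j = if j = f k then 1 else 0 := by
    intro k j
    by_cases hj : j = f k
    · have h0 : ∀ b, b ≠ f k → A k b = 0 := by
        intro b hb
        by_contra hbne
        exact hb (huniq k b (f k) hbne (hf k))
      have hs := hArow k
      rw [Finset.sum_eq_single (f k) (fun b _ hb => h0 b hb) (by simp)] at hs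
      rw [hj, if_pos rfl, hs]
    · by_contra hne
      simp only [hj, if_false] at hne
      exact hj (huniq k j (f k) hne (hf k))
  have hinj : Function.Injective f := by
    intro k k' hkk
    have h1 := hCrowE k (f k) (hf k) k'
    have h2 := hCrowE k' (f k') (hf k') k'
    rw [hkk] at h1
    rw [h2] at h1
    simp at h1
    by_contra hne
    exact hne h1.symm
  set σ : Equiv.Perm (Fin K) := Equiv.ofBijective f (Finite.injective_iff_bijective.mp hinj) with hσdef
  have hσ : ∀ k, σ k = f k := fun k => rfl
  -- z k = z' (f k)
  have hzz' : ∀ k, z k = z' (f k) := by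
    intro k
    rw [hzA k]
    calc ∑ l, A k l • z' l = ∑ l, (if l = f k then (1:ℝ) else 0) • z' l := by
          congr 1; funext l; rw [hAperm k l]
      _ = z' (f k) := by simp
  refine ⟨σ, ?_, ?_⟩
  · ext j l
    have h1 : (Z * permMatrix σ) j l = ∑ k, Z j k * (if σ k = l then 1 else 0) := by
      simp [Matrix.mul_apply, permMatrix]
    rw [h1]
    refine Eq.symm ?_
    have h2 : ∀ k : Fin K, (if σ k = l then (1:ℝ) else 0) = if k = σ.symm l then 1 else 0 := by
      intro k
      congr 1
      simp [Equiv.eq_symm_apply, eq_comm]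
    calc ∑ k, Z j k * (if σ k = l then (1:ℝ) else 0)
        = ∑ k, Z j k * (if k = σ.symm l then 1 else 0) := by
          congr 1; funext k; rw [h2 k]
      _ = Z j (σ.symm l) := by simp [mul_ite]
      _ = z (σ.symm l) j := rfl
      _ = z' (f (σ.symm l)) j := by rw [hzz']
      _ = z' (σ (σ.symm l)) j := by rw [hσ]
      _ = z' l j := by rw [Equiv.apply_symm_apply]
      _ = Z' j l := rfl
  · ext i l
    -- W' i (σ k) = W i k for all k
    have hWrel : ∀ k, W' i (σ k) = W i k := by
      have hsum : ∑ k, (fun k => W i k) k • z k = ∑ k, (fun k => W' i (σ k)) k • z k := by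
        have e1 : ∑ k, W i k • z k = fun j => ∑ k, W i k * Z j k := by
          funext j; simp [Finset.sum_apply]; rfl
        have e2 : ∑ k, W' i (σ k) • z k = fun j => ∑ l, W' i l * Z' j l := by
          funext j
          simp only [Finset.sum_apply, Pi.smul_apply, smul_eq_mul]
          have : ∀ k : Fin K, W' i (σ k) * z k j = W' i (σ k) * z' (σ k) j := by
            intro k
            rw [hzz' k, hσ k]
          rw [Finset.sum_congr rfl (fun k _ => this k)]
          exact Equiv.sum_comp σ (fun l => W' i l * z' l j)
        rw [e1, e2]
        funext j
        exact heq' i j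
      have := hZind _ _ hsum
      intro k
      exact (congrFun this k).symm
    have h1 : (W * permMatrix σ) i l = ∑ k, W i k * (if σ k = l then 1 else 0) := by
      simp [Matrix.mul_apply, permMatrix]
    rw [h1]
    refine Eq.symm ?_
    have h2 : ∀ k : Fin K, (if σ k = l then (1:ℝ) else 0) = if k = σ.symm l then 1 else 0 := by
      intro k
      congr 1
      simp [Equiv.eq_symm_apply, eq_comm]
    calc ∑ k, W i k * (if σ k = l then (1:ℝ) else 0)
        = ∑ k, W i k * (if k = σ.symm l then 1 else 0) := by
          congr 1; funext k; rw [h2 k]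
      _ = W i (σ.symm l) := by simp [mul_ite]
      _ = W' i (σ (σ.symm l)) := (hWrel (σ.symm l)).symm
      _ = W' i l := by rw [Equiv.apply_symm_apply]
end
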